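/- Let G be a finite abelian group, Ω a finite set, and T, S : G → ℂ^{Ω×Ω} families of matrices with: each T_g a permutation matrix and T_g·T_h = T_{gh}; each S_g a 0-1 matrix; Σ_{g∈G} T_g + Σ_{g∈G} S_g = J (the all-ones matrix); T_h·S_g = S_{hg} and S_g·T_h = S_{gh} for all g, h ∈ G; and S_gᵀ = S_{g⁻¹} for all g ∈ G. Fix z ∈ Ω, let Ω₁ := {y ∈ Ω : (S_1)_{z,y} = 1}, Ω̃₁ := {z} ∪ Ω₁, and let A_ℓ ∈ ℂ^{Ω₁×Ω₁} be the restriction of S_{ℓ⁻¹} to Ω₁ × Ω₁. Then: (0) the map Ω̃₁ × G → Ω, (x, g) ↦ x^g, is a bijection; (i) A_ℓᵀ = A_{ℓ⁻¹} for all ℓ ∈ G; (ii) the restriction Ã_ℓ of S_{ℓ⁻¹} to Ω̃₁ × Ω̃₁ has the bordered form (Ã_ℓ)_{z,z} = 0, (Ã_ℓ)_{z,y} = (Ã_ℓ)_{y,z} = δ_{ℓ,1} for y ∈ Ω₁, with Ω₁ × Ω₁ block equal to A_ℓ; (iii) identifying Ω with Ω̃₁ × G via the bijection of (0), T_g = I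 ⊗ P_g and S_g = Σ_{ℓ∈G} Ã_ℓ ⊗ P_{gℓ}. (Hence a roux scheme whose thick neighbourhood of a vertex induces an association scheme with |G| classes is the roux scheme obtained from that local scheme by the bordered roux-matrix construction.) -/
import Mathlib


open scoped BigOperators
open Matrix

noncomputable section

/-- **A roux scheme carrying a local scheme with `|G|` classes comes from the
bordered roux-matrix construction.** Here `Ω₁ = S_1(z)`, `Ω̃₁ = {z} ∪ Ω₁`,
`A_ℓ` is the restriction of `S_{ℓ⁻¹}` to `Ω₁ × Ω₁` and `Ã_ℓ` its bordered
extension to `Ω̃₁ × Ω̃₁`. -/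
theorem stmt8 {G : Type*} [CommGroup G] [Fintype G] [DecidableEq G]
    {Ω : Type*} [Fintype Ω] [DecidableEq Ω]
    (T S : G → Matrix Ω Ω ℂ)
    (σ : G → Equiv.Perm Ω)
    (hσ : ∀ (g : G) (x y : Ω), T g x y = if σ g x = y then 1 else 0)
    (hT : ∀ g h : G, T g * T h = T (g * h))
    (hS01 : ∀ (g : G) (x y : Ω), S g x y = 0 ∨ S g x y = 1)
    (hJ : ∀ x y : Ω, (∑ g : G, T g x y) + ∑ g : G, S g x y = 1)
    (hTS : ∀ g h : G, T h * S g = S (h * g))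
    (hST : ∀ g h : G, S g * T h = S (g * h))
    (hStrans : ∀ g : G, (S g)ᵀ = S g⁻¹)
    (z : Ω)
    (Ω₁ : Set Ω) (hΩ₁ : Ω₁ = {y : Ω | S 1 z y = 1})
    (Ωt : Set Ω) (hΩt : Ωt = insert z Ω₁) :
    -- (0) the map `(x, g) ↦ x^g` is a bijection
    Function.Bijective (fun p : Ωt × G => σ p.2 p.1) ∧
    -- (i) `A_ℓᵀ = A_{ℓ⁻¹}`
    (∀ ℓ : G, (Matrix.of fun x y : Ω₁ => S ℓ⁻¹ (x : Ω) (y : Ω))ᵀ =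
        Matrix.of fun x y : Ω₁ => S ℓ (x : Ω) (y : Ω)) ∧
    -- (ii) the restriction of `S_{ℓ⁻¹}` to `Ω̃₁ × Ω̃₁` has the bordered form
    (∀ ℓ : G, S ℓ⁻¹ z z = 0 ∧
        ∀ y ∈ Ω₁, S ℓ⁻¹ z y = (if ℓ = 1 then 1 else 0) ∧
          S ℓ⁻¹ y z = (if ℓ = 1 then 1 else 0)) ∧
    -- (iii) `T_g = I ⊗ P_g` and `S_g = Σ_ℓ Ã_ℓ ⊗ P_{gℓ}`
    (∀ g : G,
        (T g).submatrix (fun p : Ωt × G => σ p.2 p.1) (fun p : Ωt × G => σ p.2 p.1) =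
          Matrix.kroneckerMap (· * ·) (1 : Matrix Ωt Ωt ℂ)
            (Matrix.of fun h k : G => if h * g = k then 1 else 0)) ∧
    (∀ g : G,
        (S g).submatrix (fun p : Ωt × G => σ p.2 p.1) (fun p : Ωt × G => σ p.2 p.1) =
          ∑ ℓ : G, Matrix.kroneckerMap (· * ·)
            (Matrix.of fun x y : Ωt => S ℓ⁻¹ (x : Ω) (y : Ω))
            (Matrix.of fun h k : G => if h * (g * ℓ) = k then 1 else 0)) := by
  -- `σ` is an (anti)homomorphism
  have hσhom : ∀ (g h : G) (x : Ω), σ (g * h) x = σ h (σ g x) := by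
    intro g h x
    have h1 := congrFun (congrFun (hT g h) x) (σ h (σ g x))
    rw [Matrix.mul_apply] at h1
    simp only [hσ, ite_mul, one_mul, zero_mul, Finset.sum_ite_eq, Finset.mem_univ,
      if_true] at h1
    by_contra hne
    rw [if_neg hne] at h1
    exact one_ne_zero h1
  have hσ1 : ∀ x : Ω, σ 1 x = x := by
    intro x
    have h2 := hσhom 1 1 x
    rw [mul_one] at h2
    exact (σ 1).injective h2.symm
  -- counting from the row sums
  have hcount : ∀ x y : Ω,
      (Finset.univ.filter (fun g : G => σ g x = y)).card +
      (Finset.univ.filter (fun g : G => S g x y = 1)).card = 1 := by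
    intro x y
    have hj := hJ x y
    have e1 : (∑ g : G, T g x y) =
        ((Finset.univ.filter (fun g : G => σ g x = y)).card : ℂ) := by
      simp [hσ, Finset.sum_boole]
    have e2 : (∑ g : G, S g x y) =
        ((Finset.univ.filter (fun g : G => S g x y = 1)).card : ℂ) := by
      rw [← Finset.sum_boole]
      refine Finset.sum_congr rfl fun g _ => ?_
      rcases hS01 g x y with h0 | h1
      · simp [h0]
      · simp [h1]
    rw [e1, e2, ← Nat.cast_add] at hj
    exact_mod_cast hj
  -- uniqueness consequences
  have huniqS : ∀ {g h : G} {x y : Ω}, S g x y = 1 → S h x y = 1 → g = h := by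
    intro g h x y hg hh
    have hc := hcount x y
    have hle : ({g, h} : Finset G).card ≤
        (Finset.univ.filter (fun g : G => S g x y = 1)).card := by
      apply Finset.card_le_card
      intro a ha
      simp only [Finset.mem_insert, Finset.mem_singleton] at ha
      rcases ha with rfl | rfl <;> simp [hg, hh]
    by_contra hne
    rw [Finset.card_insert_of_notMem (by simpa using hne), Finset.card_singleton] at hle
    omega
  have hTS0 : ∀ {g : G} {x y : Ω}, σ g x = y → ∀ h : G, S h x y = 0 := by
    intro g x y hg h
    rcases hS01 h x y with h0 | h1
    · exact h0
    · exfalso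
      have hc := hcount x y
      have c1 : 1 ≤ (Finset.univ.filter (fun g : G => σ g x = y)).card :=
        Finset.card_pos.mpr ⟨g, by simp [hg]⟩
      have c2 : 1 ≤ (Finset.univ.filter (fun g : G => S g x y = 1)).card :=
        Finset.card_pos.mpr ⟨h, by simp [h1]⟩
      omega
  have hST0 : ∀ {g : G} {x y : Ω}, S g x y = 1 → ∀ h : G, σ h x ≠ y := by
    intro g x y hg h hh
    exact one_ne_zero (hg ▸ hTS0 hh g)
  have hstab : ∀ {g : G}, σ g z = z → g = 1 := by
    intro g hg
    have hc := hcount z z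
    have hle : ({g, 1} : Finset G).card ≤
        (Finset.univ.filter (fun g : G => σ g z = z)).card := by
      apply Finset.card_le_card
      intro a ha
      simp only [Finset.mem_insert, Finset.mem_singleton] at ha
      rcases ha with rfl | rfl <;> simp [hg, hσ1]
    by_contra hne
    rw [Finset.card_insert_of_notMem (by simpa using hne), Finset.card_singleton] at hle
    omega
  -- shift lemmas
  have hSshiftL : ∀ (g h : G) (x y : Ω), S g (σ h x) y = S (h * g) x y := by
    intro g h x y
    have h1 := congrFun (congrFun (hTS g h) x) y
    rw [Matrix.mul_apply] at h1
    simpa [hσ, ite_mul, one_mul, zero_mul, Finset.sum_ite_eq] using h1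
  have hSshiftR : ∀ (m k : G) (x y : Ω), S (m * k) x (σ k y) = S m x y := by
    intro m k x y
    have h1 := congrFun (congrFun (hST m k) x) (σ k y)
    rw [Matrix.mul_apply] at h1
    simp only [hσ, mul_ite, mul_one, mul_zero, EmbeddingLike.apply_eq_iff_eq,
      Finset.sum_ite_eq', Finset.mem_univ, if_true] at h1
    exact h1.symm
  -- S vanishes on the diagonal point z
  have hSzz : ∀ g : G, S g z z = 0 := fun g => hTS0 (hσ1 z) g
  have hmemΩ₁ : ∀ {y : Ω}, y ∈ Ω₁ ↔ S 1 z y = 1 := by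
    intro y; rw [hΩ₁]; rfl
  -- `S 1 z (σ k z) = 0` for every k
  have hS1z : ∀ k : G, S 1 z (σ k z) = 0 := by
    intro k
    have := hSshiftR k⁻¹ k z z
    rw [inv_mul_cancel] at this
    rw [this]; exact hSzz k⁻¹
  -- `S 1 z (σ k y) = S k⁻¹ z y`
  have hS1shift : ∀ (k : G) (y : Ω), S 1 z (σ k y) = S k⁻¹ z y := by
    intro k y
    have := hSshiftR k⁻¹ k z y
    rw [inv_mul_cancel] at this
    exact this
  -- the bijection (0)
  have hinj : Function.Injective (fun p : Ωt × G => σ p.2 p.1) := by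
    rintro ⟨⟨x, hx⟩, g⟩ ⟨⟨y, hy⟩, h⟩ heq
    simp only at heq
    -- x = σ (h * g⁻¹) y
    have hxy : x = σ (h * g⁻¹) y := by
      rw [hσhom, ← heq, ← hσhom, mul_inv_cancel, hσ1]
    rw [hΩt, Set.mem_insert_iff] at hx hy
    rcases hx with hx0 | hx1 <;> rcases hy with hy0 | hy1
    · -- both z
      subst hx0; subst hy0
      have : h * g⁻¹ = 1 := hstab hxy.symm
      have hgh : g = h := by
        have := mul_inv_eq_one.mp this
        exact this.symm
      subst hgh
      simp
    · -- x = z, y ∈ Ω₁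
      exfalso
      have h1 : S 1 z y = 1 := hmemΩ₁.mp hy1
      have h2 : σ (g * h⁻¹) z = y := by
        rw [← hx0, hxy, ← hσhom]
        rw [show h * g⁻¹ * (g * h⁻¹) = 1 by group, hσ1]
      exact hST0 h1 (g * h⁻¹) h2
    · -- x ∈ Ω₁, y = z
      exfalso
      have h1 : S 1 z x = 1 := hmemΩ₁.mp hx1
      exact hST0 h1 (h * g⁻¹) (hy0 ▸ hxy.symm)
    · -- both in Ω₁
      have h1 : S 1 z x = 1 := hmemΩ₁.mp hx1
      have h2 : S 1 z y = 1 := hmemΩ₁.mp hy1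
      have h3 : S 1 z (σ (h * g⁻¹) y) = 1 := by rw [← hxy]; exact h1
      rw [hS1shift] at h3
      have h4 : (h * g⁻¹)⁻¹ = 1 := huniqS h3 h2
      have h5 : h = g := by
        have := inv_eq_one.mp h4
        exact mul_inv_eq_one.mp this
      subst h5
      have h6 : x = y := by
        rw [hxy, mul_inv_cancel, hσ1]
      simp [h6]
  have hsurj : Function.Surjective (fun p : Ωt × G => σ p.2 p.1) := by
    intro w
    have hc := hcount z w
    by_cases hcase : ∃ g : G, σ g z = w
    · obtain ⟨g, hg⟩ := hcase
      exact ⟨(⟨z, by rw [hΩt]; exact Set.mem_insert z Ω₁⟩, g), hg⟩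
    · have c1 : (Finset.univ.filter (fun g : G => σ g z = w)).card = 0 := by
        rw [Finset.card_eq_zero, Finset.filter_eq_empty_iff]
        intro g _
        exact fun hgw => hcase ⟨g, hgw⟩
      have c2 : (Finset.univ.filter (fun g : G => S g z w = 1)).card = 1 := by omega
      obtain ⟨g, hg⟩ := Finset.card_pos.mp (by omega :
          0 < (Finset.univ.filter (fun g : G => S g z w = 1)).card)
      simp only [Finset.mem_filter, Finset.mem_univ, true_and] at hg
      -- y := σ g⁻¹ w ∈ Ω₁
      have hy : S 1 z (σ g⁻¹ w) = 1 := by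
        rw [hS1shift, inv_inv, hg]
      refine ⟨(⟨σ g⁻¹ w, by rw [hΩt]; exact Set.mem_insert_of_mem z (hmemΩ₁.mpr hy)⟩, g), ?_⟩
      show σ g (σ g⁻¹ w) = w
      rw [← hσhom, inv_mul_cancel, hσ1]
  refine ⟨⟨hinj, hsurj⟩, ?_, ?_, ?_, ?_⟩
  · -- (i)
    intro ℓ
    ext x y
    have h := congrFun (congrFun (hStrans ℓ) (y : Ω)) (x : Ω)
    rw [Matrix.transpose_apply] at h
    simp only [Matrix.transpose_apply, Matrix.of_apply]
    exact h.symm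
  · -- (ii)
    intro ℓ
    refine ⟨hSzz ℓ⁻¹, ?_⟩
    intro y hy
    have h1 : S 1 z y = 1 := hmemΩ₁.mp hy
    constructor
    · by_cases hl : ℓ = 1
      · subst hl; simpa using h1
      · rw [if_neg hl]
        rcases hS01 ℓ⁻¹ z y with h0 | hone
        · exact h0
        · exact absurd (huniqS hone h1) (by simpa using hl)
    · have htr : S ℓ⁻¹ y z = S ℓ z y := by
        have := congrFun (congrFun (hStrans ℓ) y) z
        simp only [Matrix.transpose_apply] at this
        exact this.symm
      rw [htr]
      by_cases hl : ℓ = 1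
      · subst hl; simpa using h1
      · rw [if_neg hl]
        rcases hS01 ℓ z y with h0 | hone
        · exact h0
        · exact absurd (huniqS hone h1) hl
  · -- (iii) T part
    intro g
    ext ⟨x, h⟩ ⟨y, k⟩
    simp only [Matrix.submatrix_apply, Matrix.kroneckerMap_apply, Matrix.of_apply]
    rw [hσ]
    have key : σ g (σ h (x : Ω)) = σ k (y : Ω) ↔ (x = y ∧ h * g = k) := by
      constructor
      · intro he
        rw [← hσhom] at he
        have := hinj (a₁ := (x, h * g)) (a₂ := (y, k)) he
        exact ⟨congrArg Prod.fst this, congrArg Prod.snd this⟩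
      · rintro ⟨rfl, rfl⟩
        rw [← hσhom]
    by_cases hc : σ g (σ h (x : Ω)) = σ k (y : Ω)
    · obtain ⟨hxy, hhk⟩ := key.mp hc
      rw [if_pos hc, hxy, Matrix.one_apply_eq, if_pos hhk, one_mul]
    · rw [if_neg hc]
      by_cases hhk : h * g = k
      · have hxy : ¬ (x = y) := fun hxy => hc (key.mpr ⟨hxy, hhk⟩)
        rw [Matrix.one_apply_ne hxy, zero_mul]
      · rw [if_neg hhk, mul_zero]
  · -- (iii) S part
    intro g
    ext ⟨x, h⟩ ⟨y, k⟩
    simp only [Matrix.submatrix_apply, Matrix.sum_apply, Matrix.kroneckerMap_apply,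
      Matrix.of_apply]
    have lhs : S g (σ h (x : Ω)) (σ k (y : Ω)) = S (k⁻¹ * (h * g)) (x : Ω) (y : Ω) := by
      rw [hSshiftL]
      have := hSshiftR (h * g * k⁻¹) k (x : Ω) (y : Ω)
      rw [show h * g * k⁻¹ * k = h * g by group] at this
      rw [this, mul_comm k⁻¹ (h * g), mul_comm (h*g) k⁻¹]
    rw [lhs]
    have hcond : ∀ ℓ : G, (h * (g * ℓ) = k) ↔ ℓ = g⁻¹ * (h⁻¹ * k) := by
      intro ℓ
      constructor
      · intro he; rw [← he]; group
      · intro he; rw [he]; group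
    have : ∀ ℓ : G, S ℓ⁻¹ (x : Ω) (y : Ω) * (if h * (g * ℓ) = k then 1 else 0)
        = if ℓ = g⁻¹ * (h⁻¹ * k) then S ℓ⁻¹ (x : Ω) (y : Ω) else 0 := by
      intro ℓ
      by_cases hc : h * (g * ℓ) = k
      · rw [if_pos hc, if_pos ((hcond ℓ).mp hc), mul_one]
      · rw [if_neg hc, if_neg (fun he => hc ((hcond ℓ).mpr he)), mul_zero]
    rw [Finset.sum_congr rfl (fun ℓ _ => this ℓ), Finset.sum_ite_eq' Finset.univ,
      if_pos (Finset.mem_univ _)]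
    congr 1
    group
  -- end

end
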